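/- For any commutative ring R, the polynomial ring R[x] is not Σ-strongly clean; specifically, the element x cannot be written as a sum of an idempotent and finitely many units of R[x]. -/
import Mathlib


/-- `x` is a sum of an idempotent and `n` units, the idempotent commuting with each unit. -/
def IsNStronglyClean {R : Type*} [Ring R] (n : ℕ) (x : R) : Prop :=
  ∃ (e : R) (u : Fin n → Rˣ), IsIdempotentElem e ∧ (∀ i, Commute e (u i)) ∧
    x = e + ∑ i, (u i : R)

/-- A ring is `n`-strongly clean if every element is `n`-strongly clean. -/
def IsNStronglyCleanRing (R : Type*) [Ring R] (n : ℕ) : Prop :=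
  ∀ x : R, IsNStronglyClean n x

lemma idem_coeff_one_eq_zero {R : Type*} [CommRing R] {e : Polynomial R}
    (he : IsIdempotentElem e) : e.coeff 1 = 0 := by
  set a := e.coeff 0
  set b := e.coeff 1
  have h0 : a * a = a := by
    have := congrArg (fun p => Polynomial.coeff p 0) he
    simpa [Polynomial.coeff_mul, Finset.Nat.sum_antidiagonal_eq_sum_range_succ_mk] using this
  have h1 : a * b + b * a = b := by
    have := congrArg (fun p => Polynomial.coeff p 1) he
    simpa [Polynomial.coeff_mul, Finset.Nat.sum_antidiagonal_eq_sum_range_succ_mk,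
      Finset.sum_range_succ] using this
  have hab : a * b = 0 := by linear_combination a * h1 - 2 * b * h0
  linear_combination 2 * hab - h1

theorem polynomial_not_sigma_strongly_clean {R : Type*} [CommRing R] [Nontrivial R]
    (n : ℕ) (e : Polynomial R) (u : Fin n → (Polynomial R)ˣ)
    (he : IsIdempotentElem e) (hc : ∀ i, Commute e ((u i : Polynomial R))) :
    Polynomial.X ≠ e + ∑ i, ((u i : Polynomial R)) := by
  intro h
  have h1 : (1 : R) = ∑ i, ((u i : Polynomial R)).coeff 1 := by
    have := congrArg (fun p => Polynomial.coeff p 1) h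
    simpa [Polynomial.finset_sum_coeff, idem_coeff_one_eq_zero he] using this
  have hn : IsNilpotent (1 : R) := by
    rw [h1]
    exact isNilpotent_sum fun i _ =>
      ((Polynomial.coeff_isUnit_isNilpotent_of_isUnit (u i).isUnit).2 1 one_ne_zero)
  obtain ⟨k, hk⟩ := hn
  simp at hk
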